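/- First variation of the chord integral under Orlicz chord addition: let φ(x₁,x₂) = φ₁(x₁) + ε φ₂(x₂) with φ₁, φ₂ ∈ Φ. For star bodies K, L in R^n and 0 ≤ i < n, lim_{ε→0⁺} [B_i(K +̌_φ ε·L) − B_i(K)]/ε = (n−i)/((φ₁)'_r(1)) · (1/n) ∫_{S^{n-1}} φ₂(d(L,u)/d(K,u)) d(K,u)^{n-i} dS(u), where (φ₁)'_r(1) is the right derivative of φ₁ at 1. -/

import Mathlib

open MeasureTheory Metric Filter Set

noncomputable section

/-- A star body in `ℝⁿ`: a compact set, star-shaped about the origin, whose radial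
function (recorded on the unit sphere) is positive and continuous. -/
structure StarBody (n : ℕ) where
  carrier : Set (EuclideanSpace ℝ (Fin n))
  radial : sphere (0 : EuclideanSpace ℝ (Fin n)) 1 → ℝ
  radial_pos : ∀ u, 0 < radial u
  radial_continuous : Continuous radial
  isCompact : IsCompact carrier
  mem_iff : ∀ x, x ∈ carrier ↔ x = 0 ∨
    ∃ (u : sphere (0 : EuclideanSpace ℝ (Fin n)) 1) (c : ℝ),
      0 ≤ c ∧ c ≤ radial u ∧ x = c • (u : EuclideanSpace ℝ (Fin n))

/-- The half chord `d(K,u) = (ρ(K,u) + ρ(K,-u))/2` of a star body in direction `u`. -/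
def StarBody.chord {n : ℕ} (K : StarBody n) (u : sphere (0 : EuclideanSpace ℝ (Fin n)) 1) : ℝ :=
  (K.radial u + K.radial (-u)) / 2

/-- Spherical (surface-type) measure on the unit sphere of `ℝⁿ`. -/
def sphereMeasure (n : ℕ) : Measure (sphere (0 : EuclideanSpace ℝ (Fin n)) 1) :=
  (volume : Measure (EuclideanSpace ℝ (Fin n))).toSphere

/-- The chord integral `B_i(K) = (1/n) ∫_{S^{n-1}} d(K,u)^{n-i} dS(u)`. -/
def chordIntegral (n i : ℕ) (K : StarBody n) : ℝ :=
  (1 / (n : ℝ)) * ∫ u, K.chord u ^ ((n : ℝ) - i) ∂(sphereMeasure n)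

/-- `K` and `L` have similar chord: `d(K,·) = λ d(L,·)` for some `λ > 0`. -/
def SimilarChord {n : ℕ} (K L : StarBody n) : Prop :=
  ∃ lam : ℝ, 0 < lam ∧ ∀ u, K.chord u = lam * L.chord u

/-- The class `Φ`: convex, strictly decreasing `φ : [0,∞) → (0,∞]` with `φ(0) = ∞`
(encoded as a blow-up at `0⁺`), `φ(∞) = 0` and `φ(1) = 1`. -/
structure OrliczPhi where
  toFun : ℝ → ℝ
  pos : ∀ x > (0 : ℝ), 0 < toFun x
  convexOn : ConvexOn ℝ (Set.Ioi 0) toFun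
  strictAnti : StrictAntiOn toFun (Set.Ioi 0)
  tendsto_zero : Tendsto toFun (nhdsWithin 0 (Set.Ioi 0)) atTop
  tendsto_atTop : Tendsto toFun atTop (nhds 0)
  map_one : toFun 1 = 1

namespace ChordVarAux

/-- The slope of `φ` at `1` from the right tends to the right derivative. -/
lemma slope_tendsto (φ : OrliczPhi) {dr : ℝ}
    (hd : HasDerivWithinAt φ.toFun dr (Set.Ici 1) 1) :
    Tendsto (fun x => (φ.toFun x - 1) / (x - 1)) (nhdsWithin 1 (Set.Ioi 1)) (nhds dr) := by
  have h := hasDerivWithinAt_iff_tendsto_slope.mp hd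
  rw [Set.Ici_sdiff_left] at h
  refine h.congr fun x => ?_
  rw [slope_def_field, φ.map_one]

lemma anti_le (φ : OrliczPhi) {x y : ℝ} (hx : 0 < x) (hxy : x ≤ y) :
    φ.toFun y ≤ φ.toFun x := by
  rcases eq_or_lt_of_le hxy with rfl | h
  · exact le_rfl
  · exact (φ.strictAnti (mem_Ioi.mpr hx) (mem_Ioi.mpr (hx.trans h)) h).le

lemma lt_one_of_one_lt (φ : OrliczPhi) {x : ℝ} (hx : 1 < x) : φ.toFun x < 1 := by
  have := φ.strictAnti (mem_Ioi.mpr one_pos) (mem_Ioi.mpr (one_pos.trans hx)) hx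
  rwa [φ.map_one] at this

lemma dr_neg (φ : OrliczPhi) {dr : ℝ}
    (hd : HasDerivWithinAt φ.toFun dr (Set.Ici 1) 1) (hdr : dr ≠ 0) : dr < 0 := by
  refine lt_of_le_of_ne ?_ hdr
  refine le_of_tendsto (slope_tendsto φ hd) ?_
  filter_upwards [self_mem_nhdsWithin] with y (hy : 1 < y)
  have h1 : φ.toFun y < 1 := lt_one_of_one_lt φ hy
  exact (div_neg_of_neg_of_pos (by linarith) (by linarith)).le

/-- A convex function lies above its right tangent line at `1`. -/
lemma support_line (φ : OrliczPhi) {dr : ℝ}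
    (hd : HasDerivWithinAt φ.toFun dr (Set.Ici 1) 1) {x : ℝ} (hx : 1 < x) :
    1 + dr * (x - 1) ≤ φ.toFun x := by
  have hs : dr ≤ (φ.toFun x - 1) / (x - 1) := by
    refine le_of_tendsto (slope_tendsto φ hd) ?_
    filter_upwards [Ioo_mem_nhdsGT_of_mem ⟨le_refl 1, hx⟩] with y hy
    have h := φ.convexOn.secant_mono (a := 1) (x := y) (y := x)
      (mem_Ioi.mpr one_pos) (mem_Ioi.mpr (one_pos.trans hy.1))
      (mem_Ioi.mpr (one_pos.trans hx)) (ne_of_gt hy.1) (ne_of_gt hx) hy.2.le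
    rwa [φ.map_one] at h
  have hx1 : 0 < x - 1 := by linarith
  have := (le_div_iff₀ hx1).mp hs
  linarith

section Pointwise

variable (φ₁ φ₂ : OrliczPhi) {dr : ℝ}
  (hd : HasDerivWithinAt φ₁.toFun dr (Set.Ici 1) 1) (hdr : dr ≠ 0)
  {a b : ℝ} (ha : 0 < a) (hb : 0 < b)
  {lam : ℝ → ℝ} (hpos : ∀ ε > (0:ℝ), 0 < lam ε)
  (hrel : ∀ ε > (0:ℝ), φ₁.toFun (a / lam ε) + ε * φ₂.toFun (b / lam ε) = 1)

include hd hdr ha hb hpos hrel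

/-- Basic facts for `ε > 0`: the ratio `x = a / lam ε` is `> 1` (so `lam ε < a`). -/
lemma ratio_gt_one {ε : ℝ} (hε : 0 < ε) : 1 < a / lam ε := by
  have hl := hpos ε hε
  have hφ₂ : 0 < φ₂.toFun (b / lam ε) := φ₂.pos _ (div_pos hb hl)
  have h1 : φ₁.toFun (a / lam ε) < 1 := by
    have := hrel ε hε; nlinarith
  by_contra hle
  push_neg at hle
  rcases eq_or_lt_of_le hle with heq | hlt
  · rw [heq, φ₁.map_one] at h1; exact lt_irrefl _ h1
  · have := φ₁.strictAnti (mem_Ioi.mpr (div_pos ha hl)) (mem_Ioi.mpr one_pos) hlt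
    rw [φ₁.map_one] at this
    linarith

lemma lam_lt {ε : ℝ} (hε : 0 < ε) : lam ε < a := by
  have := ratio_gt_one φ₁ φ₂ hd hdr ha hb hpos hrel hε
  have hl := hpos ε hε
  rwa [lt_div_iff₀ hl, one_mul] at this

/-- Quantitative upper bound on the ratio for small `ε`. -/
lemma ratio_bound {C : ℝ} (hC : φ₂.toFun (b / a) ≤ C) {ε : ℝ} (hε : 0 < ε)
    (hεs : ε < (1 - φ₁.toFun 2) / C) :
    a / lam ε - 1 ≤ ε * C / (1 - φ₁.toFun 2) := by
  have hl := hpos ε hε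
  have hx1 : 1 < a / lam ε := ratio_gt_one φ₁ φ₂ hd hdr ha hb hpos hrel hε
  have hla : lam ε < a := lam_lt φ₁ φ₂ hd hdr ha hb hpos hrel hε
  have hc : 0 < 1 - φ₁.toFun 2 := by
    have := lt_one_of_one_lt φ₁ (by norm_num : (1:ℝ) < 2); linarith
  have hCpos : 0 < C := lt_of_lt_of_le (φ₂.pos _ (div_pos hb ha)) hC
  have hφ₂C : φ₂.toFun (b / lam ε) ≤ C := by
    refine le_trans ?_ hC
    exact (φ₂.strictAnti (mem_Ioi.mpr (div_pos hb ha)) (mem_Ioi.mpr (div_pos hb hl))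
      (by exact div_lt_div_of_pos_left hb hl hla)).le
  have hφ₂pos : 0 < φ₂.toFun (b / lam ε) := φ₂.pos _ (div_pos hb hl)
  set x := a / lam ε with hxdef
  have hrel' : φ₁.toFun x - 1 = -(ε * φ₂.toFun (b / lam ε)) := by
    have := hrel ε hε; linarith
  -- first: x < 2
  have hx2 : x < 2 := by
    by_contra hge
    push_neg at hge
    have h2 : φ₁.toFun x ≤ φ₁.toFun 2 := anti_le φ₁ (by norm_num) hge
    have : 1 - φ₁.toFun 2 ≤ ε * φ₂.toFun (b / lam ε) := by linarith
    have : 1 - φ₁.toFun 2 ≤ ε * C := this.trans (by nlinarith)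
    have : (1 - φ₁.toFun 2) / C ≤ ε := (div_le_iff₀ hCpos).mpr (by linarith)
    linarith
  -- secant comparison at 2
  have hsec := φ₁.convexOn.secant_mono (a := 1) (x := x) (y := 2)
    (mem_Ioi.mpr one_pos) (mem_Ioi.mpr (one_pos.trans hx1)) (by norm_num)
    (ne_of_gt hx1) (by norm_num) hx2.le
  rw [φ₁.map_one] at hsec
  have hxm : 0 < x - 1 := by linarith
  have hsec' : (φ₁.toFun x - 1) / (x - 1) ≤ φ₁.toFun 2 - 1 := by
    rw [show ((2:ℝ)-1) = 1 by norm_num, div_one] at hsec; exact hsec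
  have hkey : (1 - φ₁.toFun 2) * (x - 1) ≤ ε * φ₂.toFun (b / lam ε) := by
    have h := (div_le_iff₀ hxm).mp hsec'
    rw [hrel'] at h
    nlinarith
  have h2 : (1 - φ₁.toFun 2) * (x - 1) ≤ ε * C := hkey.trans (by nlinarith)
  rw [le_div_iff₀ hc]
  linarith

/-- Pointwise first-order asymptotics of `lam ε ^ p`. -/
lemma tendsto_pointwise (p : ℝ) :
    Tendsto (fun ε => ((lam ε) ^ p - a ^ p) / ε) (nhdsWithin 0 (Set.Ioi 0))
      (nhds (p * (φ₂.toFun (b / a) * a ^ p) / dr)) := by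
  set C := φ₂.toFun (b / a) with hCdef
  have hCpos : 0 < C := φ₂.pos _ (div_pos hb ha)
  have hc : 0 < 1 - φ₁.toFun 2 := by
    have := lt_one_of_one_lt φ₁ (by norm_num : (1:ℝ) < 2); linarith
  set c := 1 - φ₁.toFun 2 with hcdef
  have hε₀ : (0:ℝ) < c / C := div_pos hc hCpos
  have hsmall : Set.Ioo (0:ℝ) (c / C) ∈ nhdsWithin (0:ℝ) (Set.Ioi 0) :=
    Ioo_mem_nhdsGT_of_mem ⟨le_refl 0, hε₀⟩
  have hxub : ∀ᶠ ε in nhdsWithin (0:ℝ) (Set.Ioi 0), a / lam ε - 1 ≤ ε * C / c := by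
    filter_upwards [hsmall] with ε hε
    exact ratio_bound φ₁ φ₂ hd hdr ha hb hpos hrel le_rfl hε.1 hε.2
  have hxlb : ∀ᶠ ε in nhdsWithin (0:ℝ) (Set.Ioi 0), 1 < a / lam ε := by
    filter_upwards [self_mem_nhdsWithin] with ε hε
    exact ratio_gt_one φ₁ φ₂ hd hdr ha hb hpos hrel hε
  have hx1 : Tendsto (fun ε => a / lam ε) (nhdsWithin (0:ℝ) (Set.Ioi 0)) (nhds 1) := by
    have hub' : Tendsto (fun ε : ℝ => 1 + ε * C / c) (nhdsWithin (0:ℝ) (Set.Ioi 0)) (nhds 1) := by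
      have h0 : Tendsto (fun ε : ℝ => 1 + ε * C / c) (nhds 0) (nhds (1 + 0 * C / c)) := by
        apply Filter.Tendsto.add tendsto_const_nhds
        exact (tendsto_id.mul_const C).div_const c
      simpa using h0.mono_left nhdsWithin_le_nhds
    refine tendsto_of_tendsto_of_tendsto_of_le_of_le' tendsto_const_nhds hub' ?_ ?_
    · filter_upwards [hxlb] with ε h; linarith
    · filter_upwards [hxub] with ε h; linarith
  have hxIoi : Tendsto (fun ε => a / lam ε) (nhdsWithin (0:ℝ) (Set.Ioi 0))
      (nhdsWithin 1 (Set.Ioi 1)) :=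
    tendsto_nhdsWithin_iff.mpr ⟨hx1, hxlb⟩
  have hlam : Tendsto lam (nhdsWithin (0:ℝ) (Set.Ioi 0)) (nhds a) := by
    have h1 : Tendsto (fun ε => a / (a / lam ε)) (nhdsWithin (0:ℝ) (Set.Ioi 0)) (nhds a) := by
      have h0 := (tendsto_const_nhds (x := a)).div hx1 one_ne_zero
      rw [div_one] at h0
      exact h0
    refine h1.congr' ?_
    filter_upwards [self_mem_nhdsWithin] with ε (hε : 0 < ε)
    have hl := (hpos ε hε).ne'
    field_simp
  have hblam : Tendsto (fun ε => φ₂.toFun (b / lam ε)) (nhdsWithin (0:ℝ) (Set.Ioi 0))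
      (nhds C) := by
    have hcont : ContinuousOn φ₂.toFun (Set.Ioi 0) := φ₂.convexOn.continuousOn isOpen_Ioi
    have hca : ContinuousAt φ₂.toFun (b / a) :=
      hcont.continuousAt (Ioi_mem_nhds (div_pos hb ha))
    exact hca.tendsto.comp (tendsto_const_nhds.div hlam ha.ne')
  have hslope : Tendsto (fun ε => (φ₁.toFun (a / lam ε) - 1) / (a / lam ε - 1))
      (nhdsWithin (0:ℝ) (Set.Ioi 0)) (nhds dr) :=
    (slope_tendsto φ₁ hd).comp hxIoi
  have hq : Tendsto (fun ε => (a / lam ε - 1) / ε) (nhdsWithin (0:ℝ) (Set.Ioi 0))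
      (nhds (C / (-dr))) := by
    have h1 : Tendsto (fun ε => φ₂.toFun (b / lam ε) /
        (-((φ₁.toFun (a / lam ε) - 1) / (a / lam ε - 1))))
        (nhdsWithin (0:ℝ) (Set.Ioi 0)) (nhds (C / (-dr))) :=
      hblam.div hslope.neg (neg_ne_zero.mpr hdr)
    refine h1.congr' ?_
    filter_upwards [self_mem_nhdsWithin, hxlb] with ε (hε : 0 < ε) hx
    have hl := hpos ε hε
    have hφ₂pos : 0 < φ₂.toFun (b / lam ε) := φ₂.pos _ (div_pos hb hl)
    have hrel' : φ₁.toFun (a / lam ε) - 1 = -(ε * φ₂.toFun (b / lam ε)) := by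
      have := hrel ε hε; linarith
    rw [hrel']
    have hxm : a / lam ε - 1 ≠ 0 := ne_of_gt (by linarith)
    field_simp
  have hlin : Tendsto (fun ε => (lam ε - a) / ε) (nhdsWithin (0:ℝ) (Set.Ioi 0))
      (nhds (a * C / dr)) := by
    have h1 : Tendsto (fun ε => -lam ε * ((a / lam ε - 1) / ε))
        (nhdsWithin (0:ℝ) (Set.Ioi 0)) (nhds (-a * (C / (-dr)))) :=
      hlam.neg.mul hq
    have heq : -a * (C / (-dr)) = a * C / dr := by
      field_simp
    rw [heq] at h1
    refine h1.congr' ?_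
    filter_upwards [self_mem_nhdsWithin] with ε (hε : 0 < ε)
    have hl := (hpos ε hε).ne'
    have hεne := hε.ne'
    field_simp
    ring
  have hrp : HasDerivAt (fun t : ℝ => t ^ p) (p * a ^ (p - 1)) a :=
    Real.hasDerivAt_rpow_const (Or.inl ha.ne')
  have hsl := hasDerivAt_iff_tendsto_slope.mp hrp
  have hlamne : Tendsto lam (nhdsWithin (0:ℝ) (Set.Ioi 0)) (nhdsWithin a {a}ᶜ) := by
    refine tendsto_nhdsWithin_iff.mpr ⟨hlam, ?_⟩
    filter_upwards [self_mem_nhdsWithin] with ε hε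
    exact Set.mem_compl_singleton_iff.mpr (lam_lt φ₁ φ₂ hd hdr ha hb hpos hrel hε).ne
  have hslp : Tendsto (fun ε => slope (fun t : ℝ => t ^ p) a (lam ε))
      (nhdsWithin (0:ℝ) (Set.Ioi 0)) (nhds (p * a ^ (p - 1))) :=
    hsl.comp hlamne
  have hfinal := hslp.mul hlin
  have hval : p * a ^ (p - 1) * (a * C / dr) = p * (C * a ^ p) / dr := by
    rw [Real.rpow_sub_one ha.ne']
    field_simp
  rw [hval] at hfinal
  refine hfinal.congr' ?_
  filter_upwards [self_mem_nhdsWithin] with ε (hε : 0 < ε)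
  have hla : lam ε < a := lam_lt φ₁ φ₂ hd hdr ha hb hpos hrel hε
  have hne : lam ε - a ≠ 0 := by intro h; exact hla.ne (by linarith)
  have hεne : ε ≠ 0 := hε.ne'
  rw [slope_def_field]
  field_simp

/-- Uniform bound for the difference quotient. -/
lemma quotient_bound (p : ℝ) (hp : 1 ≤ p) {A C : ℝ} (haA : a ≤ A)
    (hC : φ₂.toFun (b / a) ≤ C) {ε : ℝ} (hε : 0 < ε) (hεs : ε < (1 - φ₁.toFun 2) / C) :
    |((lam ε) ^ p - a ^ p) / ε| ≤ p * A ^ (p - 1) * (A * C / (1 - φ₁.toFun 2)) := by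
  have hl := hpos ε hε
  have hla : lam ε < a := lam_lt φ₁ φ₂ hd hdr ha hb hpos hrel hε
  have hc : 0 < 1 - φ₁.toFun 2 := by
    have := lt_one_of_one_lt φ₁ (by norm_num : (1:ℝ) < 2); linarith
  have hCpos : 0 < C := lt_of_lt_of_le (φ₂.pos _ (div_pos hb ha)) hC
  have hxb := ratio_bound φ₁ φ₂ hd hdr ha hb hpos hrel hC hε hεs
  have hA : 0 < A := lt_of_lt_of_le ha haA
  have hsub : (a - lam ε) / ε ≤ A * C / (1 - φ₁.toFun 2) := by
    have h1 : a - lam ε = lam ε * (a / lam ε - 1) := by field_simp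
    have hx0 : 0 ≤ a / lam ε - 1 := by
      have := ratio_gt_one φ₁ φ₂ hd hdr ha hb hpos hrel hε; linarith
    have h2 : lam ε * (a / lam ε - 1) ≤ A * (ε * C / (1 - φ₁.toFun 2)) :=
      mul_le_mul (by linarith) hxb hx0 hA.le
    rw [div_le_iff₀ hε, h1]
    calc lam ε * (a / lam ε - 1) ≤ A * (ε * C / (1 - φ₁.toFun 2)) := h2
      _ = A * C / (1 - φ₁.toFun 2) * ε := by ring
  obtain ⟨t, ht, hts⟩ := exists_hasDerivAt_eq_slope (fun t : ℝ => t ^ p)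
    (fun t => p * t ^ (p - 1)) hla
    (fun t ht => (Real.continuousAt_rpow_const t p
      (Or.inl (ne_of_gt (lt_of_lt_of_le hl ht.1)))).continuousWithinAt)
    (fun t ht => Real.hasDerivAt_rpow_const (Or.inl (ne_of_gt (hl.trans ht.1))))
  have htpos : 0 < t := hl.trans ht.1
  have htA : t ≤ A := le_trans ht.2.le haA
  have htb : t ^ (p - 1) ≤ A ^ (p - 1) :=
    Real.rpow_le_rpow htpos.le htA (by linarith)
  have hmono : (lam ε) ^ p ≤ a ^ p := Real.rpow_le_rpow hl.le hla.le (by linarith)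
  have hdiff : a ^ p - (lam ε) ^ p = p * t ^ (p - 1) * (a - lam ε) := by
    have hne : a - lam ε ≠ 0 := ne_of_gt (by linarith)
    field_simp at hts
    linarith [hts]
  have habs : |((lam ε) ^ p - a ^ p) / ε| = (a ^ p - (lam ε) ^ p) / ε := by
    rw [abs_div, abs_of_pos hε, abs_of_nonpos (by linarith)]
    ring_nf
  rw [habs, hdiff]
  have htp : 0 ≤ t ^ (p - 1) := (Real.rpow_pos_of_pos htpos _).le
  have hp0 : 0 < p := lt_of_lt_of_le one_pos hp
  have h3 : p * t ^ (p - 1) * (a - lam ε) / ε = p * t ^ (p - 1) * ((a - lam ε) / ε) := by ring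
  rw [h3]
  have h4 : 0 ≤ (a - lam ε) / ε := div_nonneg (by linarith) hε.le
  calc p * t ^ (p - 1) * ((a - lam ε) / ε)
      ≤ p * A ^ (p - 1) * ((a - lam ε) / ε) := by
        apply mul_le_mul_of_nonneg_right _ h4
        exact mul_le_mul_of_nonneg_left htb hp0.le
    _ ≤ p * A ^ (p - 1) * (A * C / (1 - φ₁.toFun 2)) := by
        apply mul_le_mul_of_nonneg_left hsub
        positivity

end Pointwise

end ChordVarAux

section Main

variable {n : ℕ}

lemma StarBody.chord_continuous (K : StarBody n) : Continuous K.chord := by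
  have hneg : Continuous fun u : sphere (0 : EuclideanSpace ℝ (Fin n)) 1 => -u :=
    continuous_neg
  exact (K.radial_continuous.add (K.radial_continuous.comp hneg)).div_const 2

lemma StarBody.chord_pos (K : StarBody n) (u : sphere (0 : EuclideanSpace ℝ (Fin n)) 1) :
    0 < K.chord u :=
  div_pos (add_pos (K.radial_pos u) (K.radial_pos (-u))) two_pos

instance (n : ℕ) : IsFiniteMeasure (sphereMeasure n) := by
  unfold sphereMeasure; infer_instance

lemma integrable_of_continuous (f : sphere (0 : EuclideanSpace ℝ (Fin n)) 1 → ℝ)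
    (hf : Continuous f) : Integrable f (sphereMeasure n) := by
  have : IsFiniteMeasureOnCompacts (sphereMeasure n) := ⟨fun _ _ => measure_lt_top _ _⟩
  exact hf.integrable_of_hasCompactSupport (HasCompactSupport.of_compactSpace f)

end Main

/-- First variation of the chord integral under the Orlicz chord addition
`φ₁(d(K,u)/λ) + ε φ₂(d(L,u)/λ) = 1`:
`lim_{ε→0⁺} (B_i(K +̌_φ ε·L) − B_i(K))/ε
  = ((n−i)/(φ₁)'_r(1)) · (1/n) ∫ φ₂(d(L,u)/d(K,u)) d(K,u)^{n-i} dS(u)`. -/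
theorem chordIntegral_first_variation {n i : ℕ} (hi : i < n) (φ₁ φ₂ : OrliczPhi)
    (K L : StarBody n) (M : ℝ → StarBody n)
    (hM : ∀ ε > (0 : ℝ), ∀ u,
      φ₁.toFun (K.chord u / (M ε).chord u) + ε * φ₂.toFun (L.chord u / (M ε).chord u) = 1)
    (dr : ℝ) (hd : HasDerivWithinAt φ₁.toFun dr (Set.Ici 1) 1) (hdr : dr ≠ 0) :
    Tendsto (fun ε => (chordIntegral n i (M ε) - chordIntegral n i K) / ε)
      (nhdsWithin 0 (Set.Ioi 0))
      (nhds ((((n : ℝ) - i) / dr) *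
        ((1 / (n : ℝ)) * ∫ u, φ₂.toFun (L.chord u / K.chord u) * K.chord u ^ ((n : ℝ) - i)
          ∂(sphereMeasure n))))  := by
  classical
  rcases isEmpty_or_nonempty (sphere (0 : EuclideanSpace ℝ (Fin n)) 1) with hemp | hne
  · have hz : ∀ (f : sphere (0 : EuclideanSpace ℝ (Fin n)) 1 → ℝ),
        ∫ u, f u ∂(sphereMeasure n) = 0 := fun f => integral_of_isEmpty
    have hCI : ∀ J : StarBody n, chordIntegral n i J = 0 := by
      intro J; unfold chordIntegral; rw [hz]; ring
    simp only [hCI, sub_self, zero_div, hz, mul_zero]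
    exact tendsto_const_nhds
  · haveI := hne
    have hKc : Continuous K.chord := K.chord_continuous
    have hLc : Continuous L.chord := L.chord_continuous
    obtain ⟨u₀, -, hu₀⟩ := isCompact_univ.exists_isMaxOn univ_nonempty hKc.continuousOn
    set A := K.chord u₀ with hAdef
    have hAub : ∀ u, K.chord u ≤ A := fun u => hu₀ (mem_univ u)
    have hrc : Continuous fun u => L.chord u / K.chord u :=
      hLc.div hKc fun u => (K.chord_pos u).ne'
    obtain ⟨u₁, -, hu₁⟩ := isCompact_univ.exists_isMinOn univ_nonempty hrc.continuousOn
    set m := L.chord u₁ / K.chord u₁ with hmdef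
    have hm : 0 < m := div_pos (L.chord_pos u₁) (K.chord_pos u₁)
    set C := φ₂.toFun m with hCdef
    have hCpos : 0 < C := φ₂.pos _ hm
    have hc : 0 < 1 - φ₁.toFun 2 := by
      have := ChordVarAux.lt_one_of_one_lt φ₁ (by norm_num : (1:ℝ) < 2); linarith
    set p := (n : ℝ) - i with hpdef
    have hp : 1 ≤ p := by
      have h1 : (i : ℝ) + 1 ≤ n := by exact_mod_cast hi
      rw [hpdef]; linarith
    have hp0 : (0:ℝ) ≤ p := by linarith
    have hCu : ∀ u, φ₂.toFun (L.chord u / K.chord u) ≤ C :=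
      fun u => ChordVarAux.anti_le φ₂ hm (hu₁ (mem_univ u))
    have hDCT : Tendsto
        (fun ε => ∫ u, ((M ε).chord u ^ p - K.chord u ^ p) / ε ∂(sphereMeasure n))
        (nhdsWithin 0 (Set.Ioi 0))
        (nhds (∫ u, p * (φ₂.toFun (L.chord u / K.chord u) * K.chord u ^ p) / dr
          ∂(sphereMeasure n))) := by
      refine tendsto_integral_filter_of_dominated_convergence
        (fun _ => p * A ^ (p - 1) * (A * C / (1 - φ₁.toFun 2))) ?_ ?_ ?_ ?_
      · filter_upwards [self_mem_nhdsWithin] with ε hε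
        exact ((((M ε).chord_continuous.rpow_const fun u => Or.inr hp0).sub
          (hKc.rpow_const fun u => Or.inr hp0)).div_const ε).aestronglyMeasurable
      · filter_upwards [Ioo_mem_nhdsGT_of_mem ⟨le_refl 0, div_pos hc hCpos⟩] with ε hε
        refine Filter.Eventually.of_forall fun u => ?_
        exact ChordVarAux.quotient_bound φ₁ φ₂ hd hdr (K.chord_pos u) (L.chord_pos u)
          (fun ε hε => (M ε).chord_pos u) (fun ε hε => hM ε hε u) p hp (hAub u) (hCu u)
          hε.1 hε.2
      · exact integrable_const _
      · refine Filter.Eventually.of_forall fun u => ?_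
        exact ChordVarAux.tendsto_pointwise φ₁ φ₂ hd hdr (K.chord_pos u) (L.chord_pos u)
          (fun ε hε => (M ε).chord_pos u) (fun ε hε => hM ε hε u) p
    have hInt : ∀ (J : StarBody n), Integrable (fun u => J.chord u ^ p) (sphereMeasure n) :=
      fun J => integrable_of_continuous _ (J.chord_continuous.rpow_const fun u => Or.inr hp0)
    have hEq : ∀ᶠ ε in nhdsWithin (0:ℝ) (Set.Ioi 0),
        (1 / (n : ℝ)) * ∫ u, ((M ε).chord u ^ p - K.chord u ^ p) / ε ∂(sphereMeasure n) =
        (chordIntegral n i (M ε) - chordIntegral n i K) / ε := by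
      filter_upwards [self_mem_nhdsWithin] with ε hε
      unfold chordIntegral
      rw [← mul_sub, ← integral_sub (hInt (M ε)) (hInt K), mul_div_assoc, ← integral_div]
    have hval : ∫ u, p * (φ₂.toFun (L.chord u / K.chord u) * K.chord u ^ p) / dr
          ∂(sphereMeasure n)
        = (p / dr) * ∫ u, φ₂.toFun (L.chord u / K.chord u) * K.chord u ^ p
          ∂(sphereMeasure n) := by
      rw [← integral_const_mul]
      congr 1
      funext u
      ring
    have hlim := hDCT.const_mul (1 / (n : ℝ))
    rw [hval] at hlim
    have hfin : (1 / (n:ℝ)) * ((p / dr) *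
          ∫ u, φ₂.toFun (L.chord u / K.chord u) * K.chord u ^ p ∂(sphereMeasure n))
        = (p / dr) * ((1 / (n:ℝ)) *
          ∫ u, φ₂.toFun (L.chord u / K.chord u) * K.chord u ^ p ∂(sphereMeasure n)) := by
      ring
    rw [hfin] at hlim
    exact hlim.congr' hEq
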